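/- Let H : [0,∞) → [0,∞) be convex with H(0)=0 and define ω_H(x) = sup_{t>0} H(tx)/H(t), assumed finite on (0,∞). Then ω_H is convex, submultiplicative (ω_H(ab) ≤ ω_H(a)·ω_H(b) for all a,b ≥ 0), satisfies ω_H ≥ H/H(1), and if H(x)/x² is non-decreasing on (0,∞), then so is ω_H(x)/x². -/

import Mathlib

open Real Set

/-- `ω_H(x) = sup_{t > 0} H(tx)/H(t)`. -/
noncomputable def omegaH (H : ℝ → ℝ) (x : ℝ) : ℝ :=
  ⨆ t : {t : ℝ // 0 < t}, H (t * x) / H t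

/-- For convex `H : [0,∞) → [0,∞)` with `H(0)=0`, `H(1)>0` and `ω_H` finite on
`(0,∞)`: `ω_H` is convex, submultiplicative, dominates `H/H(1)`, and inherits the
monotonicity of `H(x)/x²`. -/
theorem stmt7 (H : ℝ → ℝ)
    (hconv : ConvexOn ℝ (Set.Ici 0) H)
    (hnonneg : ∀ x ≥ (0:ℝ), 0 ≤ H x)
    (h0 : H 0 = 0) (h1 : 0 < H 1)
    (hfin : ∀ x > (0:ℝ), BddAbove (Set.range fun t : {t : ℝ // 0 < t} => H (t * x) / H t)) :
    ConvexOn ℝ (Set.Ici 0) (omegaH H) ∧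
    (∀ a ≥ (0:ℝ), ∀ b ≥ (0:ℝ), omegaH H (a * b) ≤ omegaH H a * omegaH H b) ∧
    (∀ x ≥ (0:ℝ), H x / H 1 ≤ omegaH H x) ∧
    (MonotoneOn (fun x => H x / x ^ 2) (Set.Ioi 0) →
      MonotoneOn (fun x => omegaH H x / x ^ 2) (Set.Ioi 0)) := by
  haveI : Nonempty {t : ℝ // 0 < t} := ⟨⟨1, one_pos⟩⟩
  -- H is monotone on [0, ∞)
  have hmono : ∀ x y : ℝ, 0 ≤ x → x ≤ y → H x ≤ H y := by
    intro x y hx hxy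
    rcases eq_or_lt_of_le (hx.trans hxy) with hy | hy
    · have hx0 : x = 0 := le_antisymm (hxy.trans hy.symm.le) hx
      rw [hx0, ← hy]
    · have hxy' : x / y ≤ 1 := by
        rw [div_le_one hy]; exact hxy
      have key := hconv.2 (self_mem_Ici (a := (0:ℝ))) (mem_Ici.mpr hy.le)
        (show (0:ℝ) ≤ 1 - x / y by linarith)
        (show (0:ℝ) ≤ x / y from div_nonneg hx hy.le) (by ring)
      simp only [smul_eq_mul, mul_zero, zero_add, h0] at key
      rw [div_mul_cancel₀ _ hy.ne'] at key
      have hy0 : 0 ≤ H y := hnonneg y (hx.trans hxy)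
      nlinarith [key, hxy', hy0]
  -- H is strictly positive on (0, ∞)
  have hpos : ∀ t : ℝ, 0 < t → 0 < H t := by
    intro t ht
    by_contra hHt
    have hHt0 : H t = 0 := le_antisymm (not_lt.mp hHt) (hnonneg t ht.le)
    have ht1 : t < 1 := by
      by_contra h
      have := hmono 1 t zero_le_one (not_lt.mp h)
      rw [hHt0] at this; linarith
    set Z : Set ℝ := {u : ℝ | u ∈ Icc t 1 ∧ H u = 0} with hZdef
    have hZne : t ∈ Z := ⟨⟨le_refl t, ht1.le⟩, hHt0⟩
    have hZbdd : BddAbove Z := ⟨1, fun u hu => hu.1.2⟩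
    set s := sSup Z with hs
    have hs_le1 : s ≤ 1 := csSup_le ⟨t, hZne⟩ (fun u hu => hu.1.2)
    have hs_ge : t ≤ s := le_csSup hZbdd hZne
    have hs_pos : 0 < s := ht.trans_le hs_ge
    rcases lt_or_eq_of_le hs_le1 with hs1 | hs1
    · -- s < 1
      obtain ⟨M, hM⟩ := hfin (1 / s) (by positivity)
      have hM' : ∀ v : {t : ℝ // 0 < t}, H (v * (1 / s)) / H v ≤ M := by
        intro v; exact hM (Set.mem_range_self v)
      have hM0 : 0 ≤ M :=
        le_trans (div_nonneg (hnonneg _ (by positivity)) (hnonneg 1 zero_le_one))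
          (hM' ⟨1, one_pos⟩)
      set δ := (1 - s) / (2 * (M + 1)) with hδ
      have hδpos : 0 < δ := div_pos (by linarith) (by linarith)
      have hδsmall : δ ≤ (1 - s) / 2 := by
        rw [hδ, div_le_div_iff₀ (by linarith) two_pos]
        nlinarith
      obtain ⟨u, huZ, hu⟩ := exists_lt_of_lt_csSup ⟨t, hZne⟩ (show s - δ < s by linarith)
      set v := s + δ with hv
      have hv1 : v ≤ 1 := by rw [hv]; linarith
      have hus : u ≤ s := le_csSup hZbdd huZ
      have hu0 : 0 < u := ht.trans_le huZ.1.1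
      have hu1 : u < 1 := lt_of_le_of_lt hus hs1
      have hvpos : 0 < v := by positivity
      have h1u : (0:ℝ) < 1 - u := by linarith
      have hlam0 : (0:ℝ) ≤ (1 - v) / (1 - u) := by
        apply div_nonneg <;> linarith
      have hlam1 : (0:ℝ) ≤ (v - u) / (1 - u) := by
        apply div_nonneg <;> linarith
      have key := hconv.2 (mem_Ici.mpr hu0.le)
        (mem_Ici.mpr zero_le_one) hlam0 hlam1
        (by rw [← add_div, show 1 - v + (v - u) = 1 - u by ring,
              div_self h1u.ne'])
      have hcomb : ((1 - v) / (1 - u)) • u + ((v - u) / (1 - u)) • (1:ℝ) = v := by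
        simp only [smul_eq_mul, mul_one]
        rw [div_mul_eq_mul_div, ← add_div,
          show (1 - v) * u + (v - u) = v * (1 - u) by ring,
          mul_div_assoc, div_self h1u.ne', mul_one]
      rw [hcomb] at key
      simp only [smul_eq_mul, huZ.2, mul_zero, zero_add, mul_one] at key
      have hHv_le : H v ≤ H 1 / (M + 1) := by
        have h2δ : v - u ≤ 2 * δ := by rw [hv]; linarith
        have hfr : (v - u) / (1 - u) ≤ 2 * δ / (1 - s) :=
          div_le_div₀ (by linarith) h2δ (by linarith) (by linarith)
        have hδeq : 2 * (M + 1) * δ = 1 - s := by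
          rw [hδ, mul_comm, div_mul_cancel₀ _ (ne_of_gt (by linarith : (0:ℝ) < 2 * (M + 1)))]
        have h2δs : 2 * δ / (1 - s) = 1 / (M + 1) := by
          rw [div_eq_div_iff (by linarith : (0:ℝ) < 1 - s).ne' (by linarith : (0:ℝ) < M + 1).ne']
          linear_combination hδeq
        calc H v ≤ (v - u) / (1 - u) * H 1 := key
          _ ≤ 2 * δ / (1 - s) * H 1 := mul_le_mul_of_nonneg_right hfr h1.le
          _ = H 1 / (M + 1) := by rw [h2δs]; ring
      have hHv_pos : 0 < H v := by
        rcases (hnonneg v hvpos.le).lt_or_eq with h | h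
        · exact h
        · exfalso
          have hvZ : v ∈ Z := ⟨⟨by rw [hv]; linarith, hv1⟩, h.symm⟩
          have := le_csSup hZbdd hvZ
          rw [hv] at this
          linarith
      have hterm := hM' ⟨v, hvpos⟩
      have hvs : (1:ℝ) ≤ v * (1 / s) := by
        rw [mul_one_div, le_div_iff₀ hs_pos, one_mul, hv]; linarith
      have hH1le : H 1 ≤ H (v * (1 / s)) := hmono 1 _ zero_le_one hvs
      have hfinal : M + 1 ≤ M := by
        have e1 : H 1 / (H 1 / (M + 1)) = M + 1 := by
          rw [div_div_eq_mul_div, mul_comm, mul_div_assoc, div_self h1.ne', mul_one]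
        calc M + 1 = H 1 / (H 1 / (M + 1)) := e1.symm
          _ ≤ H 1 / H v := by
              apply div_le_div_of_nonneg_left h1.le hHv_pos hHv_le
          _ ≤ H (v * (1 / s)) / H v := by gcongr
          _ ≤ M := hterm
      linarith
    · -- s = 1 : zeros accumulate at 1
      have hH2 : 0 < H 2 := lt_of_lt_of_le h1 (hmono 1 2 zero_le_one one_le_two)
      set ε := H 1 / (H 2 + H 1) with hε
      have hεpos : 0 < ε := div_pos h1 (by linarith)
      obtain ⟨u, huZ, hu⟩ := exists_lt_of_lt_csSup ⟨t, hZne⟩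
        (show 1 - ε < s by rw [← hs1]; linarith)
      have hu0 : 0 < u := ht.trans_le huZ.1.1
      have hu1 : u < 1 :=
        lt_of_le_of_ne huZ.1.2 (by intro h; rw [h] at huZ; exact h1.ne' huZ.2)
      have h2u : (0:ℝ) < 2 - u := by linarith
      have hlam0 : (0:ℝ) ≤ 1 / (2 - u) := by positivity
      have hlam1 : (0:ℝ) ≤ (1 - u) / (2 - u) := div_nonneg (by linarith) (by linarith)
      have key := hconv.2 (mem_Ici.mpr hu0.le)
        (show (2:ℝ) ∈ Ici (0:ℝ) by norm_num) hlam0 hlam1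
        (by rw [← add_div, show 1 + (1 - u) = 2 - u by ring, div_self h2u.ne'])
      have hcomb : (1 / (2 - u)) • u + ((1 - u) / (2 - u)) • (2:ℝ) = 1 := by
        simp only [smul_eq_mul]
        rw [one_div, inv_mul_eq_div, div_mul_eq_mul_div, ← add_div,
          show u + (1 - u) * 2 = 1 * (2 - u) by ring,
          mul_div_assoc, div_self h2u.ne', mul_one]
      rw [hcomb] at key
      simp only [smul_eq_mul, huZ.2, mul_zero, zero_add] at key
      have hfrac : (1 - u) / (2 - u) ≤ 1 - u := by
        rw [div_le_iff₀ h2u]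
        nlinarith
      have hle2 : H 1 ≤ (1 - u) * H 2 := by nlinarith
      have hlt : (1 - u) * H 2 < ε * H 2 := by
        apply mul_lt_mul_of_pos_right _ hH2
        linarith
      have hcon : H 1 < ε * H 2 := lt_of_le_of_lt hle2 hlt
      rw [hε, div_mul_eq_mul_div, lt_div_iff₀ (by linarith)] at hcon
      nlinarith
  -- basic facts about omegaH
  have hbdd : ∀ x : ℝ, 0 ≤ x →
      BddAbove (Set.range fun t : {t : ℝ // 0 < t} => H (t * x) / H t) := by
    intro x hx
    rcases hx.eq_or_lt with h | h
    · refine ⟨0, ?_⟩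
      rintro y ⟨t, rfl⟩
      simp [← h, h0]
    · exact hfin x h
  have hle : ∀ x : ℝ, 0 ≤ x → ∀ t : {t : ℝ // 0 < t}, H (t * x) / H t ≤ omegaH H x := by
    intro x hx t
    exact le_ciSup (hbdd x hx) t
  have htermnn : ∀ x : ℝ, 0 ≤ x → ∀ t : {t : ℝ // 0 < t}, 0 ≤ H (t * x) / H t := by
    intro x hx t
    exact div_nonneg (hnonneg _ (mul_nonneg t.2.le hx)) (hnonneg _ t.2.le)
  have hωnn : ∀ x : ℝ, 0 ≤ x → 0 ≤ omegaH H x := by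
    intro x hx
    exact le_trans (htermnn x hx ⟨1, one_pos⟩) (hle x hx ⟨1, one_pos⟩)
  have hω0 : omegaH H 0 = 0 := by
    unfold omegaH
    have hz : (fun t : {t : ℝ // 0 < t} => H (t * 0) / H t) = fun _ => 0 := by
      funext t; simp [h0]
    rw [hz, ciSup_const]
  refine ⟨?_, ?_, ?_, ?_⟩
  · -- convexity
    refine ⟨convex_Ici 0, ?_⟩
    intro x hx y hy a b ha hb hab
    simp only [smul_eq_mul]
    apply ciSup_le
    intro t
    have htx : (0:ℝ) ≤ t * x := mul_nonneg t.2.le hx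
    have hty : (0:ℝ) ≤ t * y := mul_nonneg t.2.le hy
    have key := hconv.2 (mem_Ici.mpr htx)
      (mem_Ici.mpr hty) ha hb hab
    simp only [smul_eq_mul] at key
    have heq : (t:ℝ) * (a * x + b * y) = a * ((t:ℝ) * x) + b * ((t:ℝ) * y) := by ring
    rw [heq]
    have hHt := hpos t t.2
    calc H (a * ((t:ℝ) * x) + b * ((t:ℝ) * y)) / H t
        ≤ (a * H ((t:ℝ) * x) + b * H ((t:ℝ) * y)) / H t := by gcongr
      _ = a * (H ((t:ℝ) * x) / H t) + b * (H ((t:ℝ) * y) / H t) := by ring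
      _ ≤ a * omegaH H x + b * omegaH H y := by
          apply add_le_add
          · exact mul_le_mul_of_nonneg_left (hle x hx t) ha
          · exact mul_le_mul_of_nonneg_left (hle y hy t) hb
  · -- submultiplicative
    intro a ha b hb
    rcases ha.eq_or_lt with ha0 | ha0
    · have hab0 : a * b = 0 := by rw [← ha0, zero_mul]
      rw [hab0, hω0]
      exact mul_nonneg (hωnn a ha) (hωnn b hb)
    rcases hb.eq_or_lt with hb0 | hb0
    · have hab0 : a * b = 0 := by rw [← hb0, mul_zero]
      rw [hab0, hω0]
      exact mul_nonneg (hωnn a ha) (hωnn b hb)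
    apply ciSup_le
    intro t
    have hHt := (hpos t t.2).ne'
    have htb : (0:ℝ) < t * b := mul_pos t.2 hb0
    have hHtb := (hpos _ htb).ne'
    have h1' : H ((t:ℝ) * (a * b)) / H t
        = H ((t:ℝ) * b * a) / H ((t:ℝ) * b) * (H ((t:ℝ) * b) / H t) := by
      rw [show (t:ℝ) * (a * b) = t * b * a by ring]
      field_simp
    rw [h1']
    exact mul_le_mul (hle a ha.le ⟨t * b, htb⟩) (hle b hb.le t) (htermnn b hb.le t)
      (hωnn a ha.le)
  · -- dominates H / H 1
    intro x hx
    have := hle x hx ⟨1, one_pos⟩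
    rwa [one_mul] at this
  · -- monotonicity of omegaH x / x^2
    intro hm x hx y hy hxy
    simp only [mem_Ioi] at hx hy
    simp only
    rw [div_le_div_iff₀ (pow_pos hx 2) (pow_pos hy 2)]
    have key : omegaH H x ≤ omegaH H y * x ^ 2 / y ^ 2 := by
      apply ciSup_le
      intro t
      have hHt := hpos t t.2
      have htx : (0:ℝ) < t * x := mul_pos t.2 hx
      have hty : (0:ℝ) < t * y := mul_pos t.2 hy
      have hm' : H ((t:ℝ) * x) / ((t:ℝ) * x) ^ 2 ≤ H ((t:ℝ) * y) / ((t:ℝ) * y) ^ 2 :=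
        hm (mem_Ioi.mpr htx) (mem_Ioi.mpr hty)
          (by nlinarith [t.2])
      have hHxy0 : H ((t:ℝ) * x) * y ^ 2 ≤ H ((t:ℝ) * y) * x ^ 2 := by
        rw [div_le_div_iff₀ (by positivity) (by positivity)] at hm'
        nlinarith [hm', pow_pos t.2 2]
      have hHxy : H ((t:ℝ) * x) ≤ H ((t:ℝ) * y) * x ^ 2 / y ^ 2 := by
        rw [le_div_iff₀ (by positivity)]
        exact hHxy0
      have hHty_le : H ((t:ℝ) * y) / H t ≤ omegaH H y := hle y hy.le t
      calc H ((t:ℝ) * x) / H t ≤ H ((t:ℝ) * y) * x ^ 2 / y ^ 2 / H t := by gcongr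
        _ = H ((t:ℝ) * y) / H t * x ^ 2 / y ^ 2 := by ring
        _ ≤ omegaH H y * x ^ 2 / y ^ 2 := by gcongr
    calc omegaH H x * y ^ 2 ≤ omegaH H y * x ^ 2 / y ^ 2 * y ^ 2 :=
        mul_le_mul_of_nonneg_right key (sq_nonneg y)
      _ = omegaH H y * x ^ 2 := by field_simp
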